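/- arXiv:2111.09810 — 3 statements merged into one kernel-verified Lean document; each statement's English description precedes it below -/
import Mathlib

section
/- Let G be a group and let L = ⊕_{g∈G} L^(g) be a G-graded Lie algebra (meaning [L^(g), L^(h)] ⊆ L^(gh)). If [L^(g₁), L^(g₂), …, L^(g_k)] ≠ 0 for some g₁,…,g_k ∈ G (left-normed commutator of graded components), then gᵢgⱼ = gⱼgᵢ for all 1 ≤ i,j ≤ k. -/
/-- The span of all brackets `⁅a, b⁆` with `a ∈ A`, `b ∈ B`. -/
def bracketSpan {F L : Type*} [Field F] [LieRing L] [LieAlgebra F L]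
    (A B : Submodule F L) : Submodule F L :=
  Submodule.span F {z : L | ∃ a ∈ A, ∃ b ∈ B, z = ⁅a, b⁆}

/-- The left-normed commutator `[A₁, A₂, …, A_k] = [[A₁,…,A_{k−1}], A_k]` of a family of
subspaces, defined by folding `bracketSpan` from the left. -/
def leftNormedBracket {F L : Type*} [Field F] [LieRing L] [LieAlgebra F L]
    (A : Submodule F L) (l : List (Submodule F L)) : Submodule F L :=
  l.foldl bracketSpan A

section Aux
variable {F L G : Type*} [Field F] [LieRing L] [LieAlgebra F L] [Group G]

lemma lie_mem_bracketSpan {A B : Submodule F L} {a b : L} (ha : a ∈ A) (hb : b ∈ B) :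
    ⁅a, b⁆ ∈ bracketSpan A B :=
  Submodule.subset_span ⟨a, ha, b, hb, rfl⟩

lemma bracketSpan_le {A B C : Submodule F L} (h : ∀ a ∈ A, ∀ b ∈ B, ⁅a, b⁆ ∈ C) :
    bracketSpan A B ≤ C := by
  rw [bracketSpan, Submodule.span_le]
  rintro z ⟨a, ha, b, hb, rfl⟩
  exact h a ha b hb

lemma bracketSpan_mono {A A' B B' : Submodule F L} (hA : A ≤ A') (hB : B ≤ B') :
    bracketSpan A B ≤ bracketSpan A' B' :=
  bracketSpan_le fun a ha b hb => lie_mem_bracketSpan (hA ha) (hB hb)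

lemma bracketSpan_bot_left (B : Submodule F L) : bracketSpan (⊥ : Submodule F L) B = ⊥ :=
  le_bot_iff.1 <| bracketSpan_le fun a ha b _ => by
    rw [Submodule.mem_bot] at ha ⊢; rw [ha, zero_lie]

lemma bracketSpan_sup_le (A A' B : Submodule F L) :
    bracketSpan (A ⊔ A') B ≤ bracketSpan A B ⊔ bracketSpan A' B := by
  refine bracketSpan_le fun a ha b hb => ?_
  obtain ⟨x, hx, y, hy, rfl⟩ := Submodule.mem_sup.1 ha
  rw [add_lie]
  exact Submodule.add_mem _ (Submodule.mem_sup_left (lie_mem_bracketSpan hx hb))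
    (Submodule.mem_sup_right (lie_mem_bracketSpan hy hb))

lemma bracketSpan_comm_le (A B : Submodule F L) : bracketSpan A B ≤ bracketSpan B A :=
  bracketSpan_le fun a ha b hb => by
    rw [← lie_skew]
    exact Submodule.neg_mem _ (lie_mem_bracketSpan hb ha)

lemma bracketSpan_rotate (A B C : Submodule F L) :
    bracketSpan (bracketSpan A B) C ≤
      bracketSpan (bracketSpan A C) B ⊔ bracketSpan A (bracketSpan B C) := by
  refine bracketSpan_le fun w hw c hc => ?_
  induction hw using Submodule.span_induction with
  | mem x hx =>
      obtain ⟨a, ha, b, hb, rfl⟩ := hx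
      have key : ⁅⁅a, b⁆, c⁆ = ⁅⁅a, c⁆, b⁆ + ⁅a, ⁅b, c⁆⁆ := by
        have h1 := leibniz_lie a b c
        have h2 : -⁅b, ⁅a, c⁆⁆ = ⁅⁅a, c⁆, b⁆ := lie_skew _ _
        rw [← h2, h1]; abel
      rw [key]
      exact Submodule.add_mem _
        (Submodule.mem_sup_left (lie_mem_bracketSpan (lie_mem_bracketSpan ha hc) hb))
        (Submodule.mem_sup_right (lie_mem_bracketSpan ha (lie_mem_bracketSpan hb hc)))
  | zero => rw [zero_lie]; exact Submodule.zero_mem _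
  | add x y hx hy ihx ihy => rw [add_lie]; exact Submodule.add_mem _ ihx ihy
  | smul r x hx ih => rw [smul_lie]; exact Submodule.smul_mem _ _ ih

end Aux


section Aux2
variable {F L G : Type*} [Field F] [LieRing L] [LieAlgebra F L] [Group G]

lemma foldl_bracketSpan_mono : ∀ (l : List (Submodule F L)) {A B : Submodule F L}, A ≤ B →
    l.foldl bracketSpan A ≤ l.foldl bracketSpan B
  | [], _, _, h => h
  | C :: l, A, B, h => foldl_bracketSpan_mono l (bracketSpan_mono h le_rfl)

lemma foldl_bracketSpan_bot : ∀ l : List (Submodule F L),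
    l.foldl bracketSpan (⊥ : Submodule F L) = ⊥
  | [] => rfl
  | C :: l => by
      rw [List.foldl_cons, bracketSpan_bot_left]; exact foldl_bracketSpan_bot l

lemma foldl_bracketSpan_sup_le : ∀ (l : List (Submodule F L)) (A B : Submodule F L),
    l.foldl bracketSpan (A ⊔ B) ≤ l.foldl bracketSpan A ⊔ l.foldl bracketSpan B
  | [], A, B => le_rfl
  | C :: l, A, B => by
      simp only [List.foldl_cons]
      exact (foldl_bracketSpan_mono l (bracketSpan_sup_le A B C)).trans
        (foldl_bracketSpan_sup_le l _ _)

variable [DecidableEq G] {V : G → Submodule F L}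

lemma grade_unique (hdec : DirectSum.IsInternal V) {x : L} {a b : G}
    (hx : x ∈ V a) (hx' : x ∈ V b) (h0 : x ≠ 0) : a = b := by
  by_contra hab
  exact h0 (Submodule.disjoint_def.mp
    (hdec.submodule_iSupIndep.pairwiseDisjoint hab) x hx hx')

lemma factA (hdec : DirectSum.IsInternal V)
    (hgr : ∀ g h : G, ∀ x ∈ V g, ∀ y ∈ V h, ⁅x, y⁆ ∈ V (g * h))
    {a b : G} (hab : a * b ≠ b * a) : ∀ x ∈ V a, ∀ y ∈ V b, ⁅x, y⁆ = 0 := by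
  intro x hx y hy
  by_contra h0
  refine hab (grade_unique hdec (hgr a b x hx y hy) ?_ h0)
  rw [← lie_skew]
  exact Submodule.neg_mem _ (hgr b a y hy x hx)

lemma factC (hdec : DirectSum.IsInternal V)
    (hgr : ∀ g h : G, ∀ x ∈ V g, ∀ y ∈ V h, ⁅x, y⁆ ∈ V (g * h))
    {a b : G} (hab : a * b ≠ b * a) (u : L) :
    ∀ x ∈ V a, ∀ y ∈ V b, ⁅⁅u, x⁆, y⁆ = 0 := by
  intro x hx y hy
  have hu : u ∈ ⨆ g, V g := by rw [hdec.submodule_iSup_eq_top]; trivial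
  refine Submodule.iSup_induction V (motive := fun u => ⁅⁅u, x⁆, y⁆ = 0) hu ?_ (by simp) ?_
  · intro c u hu
    have hxy : ⁅x, y⁆ = 0 := factA hdec hgr hab x hx y hy
    have h1 := leibniz_lie u x y
    rw [hxy, lie_zero] at h1
    have h2 : ⁅⁅u, x⁆, y⁆ = ⁅⁅u, y⁆, x⁆ := by
      have h3 : -⁅x, ⁅u, y⁆⁆ = ⁅⁅u, y⁆, x⁆ := lie_skew _ _
      rw [← h3]
      exact eq_neg_of_add_eq_zero_left h1.symm
    by_contra h0
    have m1 : ⁅⁅u, x⁆, y⁆ ∈ V (c * a * b) := hgr _ _ _ (hgr _ _ _ hu _ hx) _ hy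
    have m2 : ⁅⁅u, x⁆, y⁆ ∈ V (c * b * a) := by
      rw [h2]; exact hgr _ _ _ (hgr _ _ _ hu _ hy) _ hx
    have := grade_unique hdec m1 m2 h0
    rw [mul_assoc, mul_assoc] at this
    exact hab (mul_left_cancel this)
  · intro u v hu hv
    rw [add_lie, add_lie, hu, hv, add_zero]

end Aux2

section Aux3
variable {F L G : Type*} [Field F] [LieRing L] [LieAlgebra F L] [Group G]
  [DecidableEq G]

/-- Span-level version of fact A. -/
lemma factA_span {V : G → Submodule F L} (hdec : DirectSum.IsInternal V)
    (hgr : ∀ g h : G, ∀ x ∈ V g, ∀ y ∈ V h, ⁅x, y⁆ ∈ V (g * h))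
    {a b : G} (hab : a * b ≠ b * a) : bracketSpan (V a) (V b) = ⊥ :=
  le_bot_iff.1 <| bracketSpan_le fun x hx y hy => by
    rw [Submodule.mem_bot]; exact factA hdec hgr hab x hx y hy

/-- Span-level version of fact C. -/
lemma factC_span {V : G → Submodule F L} (hdec : DirectSum.IsInternal V)
    (hgr : ∀ g h : G, ∀ x ∈ V g, ∀ y ∈ V h, ⁅x, y⁆ ∈ V (g * h))
    {a b : G} (hab : a * b ≠ b * a) (U : Submodule F L) :
    bracketSpan (bracketSpan U (V a)) (V b) = ⊥ := by
  refine le_bot_iff.1 <| bracketSpan_le fun w hw y hy => ?_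
  rw [Submodule.mem_bot]
  induction hw using Submodule.span_induction with
  | mem z hz =>
      obtain ⟨u, hu, x, hx, rfl⟩ := hz
      exact factC hdec hgr hab u x hx y hy
  | zero => rw [zero_lie]
  | add z w hz hw ihz ihw => rw [add_lie, ihz, ihw, add_zero]
  | smul r z hz ih => rw [smul_lie, ih, smul_zero]

/-- The left-normed bracket of the list of graded components given by a word in `G`. -/
def Dw (V : G → Submodule F L) : List G → Submodule F L
  | [] => ⊥
  | g :: t => leftNormedBracket (V g) (t.map V)

lemma Dw_cons (V : G → Submodule F L) (g : G) (t : List G) :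
    Dw V (g :: t) = (t.map V).foldl bracketSpan (V g) := rfl

lemma Dw_append (V : G → Submodule F L) (g : G) (t r : List G) :
    Dw V (g :: t ++ r) = (r.map V).foldl bracketSpan (Dw V (g :: t)) := by
  rw [Dw_cons]
  show Dw V (g :: (t ++ r)) = _
  rw [Dw_cons, List.map_append, List.foldl_append]

lemma Dw_swap (V : G → Submodule F L)
    (hgr : ∀ g h : G, ∀ x ∈ V g, ∀ y ∈ V h, ⁅x, y⁆ ∈ V (g * h))
    (p : List G) (a x : G) (r : List G) :
    Dw V (p ++ a :: x :: r) ≤ Dw V (p ++ x :: a :: r) ⊔ Dw V (p ++ (a * x) :: r) := by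
  have hVax : bracketSpan (V a) (V x) ≤ V (a * x) :=
    bracketSpan_le fun u hu v hv => hgr a x u hu v hv
  cases p with
  | nil =>
      refine le_trans ?_ le_sup_left
      simp only [List.nil_append, Dw_cons, List.map_cons, List.foldl_cons]
      exact foldl_bracketSpan_mono _ (bracketSpan_comm_le _ _)
  | cons g t =>
      rw [show (g :: t) ++ a :: x :: r = g :: t ++ a :: x :: r from rfl,
        show (g :: t) ++ x :: a :: r = g :: t ++ x :: a :: r from rfl,
        show (g :: t) ++ (a * x) :: r = g :: t ++ (a * x) :: r from rfl,
        Dw_append, Dw_append, Dw_append]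
      set U := Dw V (g :: t)
      simp only [List.map_cons, List.foldl_cons]
      have key : bracketSpan (bracketSpan U (V a)) (V x) ≤
          bracketSpan (bracketSpan U (V x)) (V a) ⊔ bracketSpan U (V (a * x)) :=
        (bracketSpan_rotate U (V a) (V x)).trans
          (sup_le_sup le_rfl (bracketSpan_mono le_rfl hVax))
      exact (foldl_bracketSpan_mono _ key).trans (foldl_bracketSpan_sup_le _ _ _)

lemma Dw_pair_bot {V : G → Submodule F L} (hdec : DirectSum.IsInternal V)
    (hgr : ∀ g h : G, ∀ x ∈ V g, ∀ y ∈ V h, ⁅x, y⁆ ∈ V (g * h))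
    {a b : G} (hab : a * b ≠ b * a) (p : List G) :
    Dw V (p ++ [a, b]) = ⊥ := by
  cases p with
  | nil =>
      simp only [List.nil_append, Dw_cons, List.map_cons, List.map_nil, List.foldl_cons,
        List.foldl_nil]
      exact factA_span hdec hgr hab
  | cons g t =>
      rw [show (g :: t) ++ [a, b] = g :: t ++ [a, b] from rfl, Dw_append]
      simp only [List.map_cons, List.map_nil, List.foldl_cons, List.foldl_nil]
      exact factC_span hdec hgr hab _

end Aux3

section Main
variable {F L G : Type*} [Field F] [LieRing L] [LieAlgebra F L] [Group G]
  [DecidableEq G] {V : G → Submodule F L}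

/-- Moving an entry to the right end of the word. -/
lemma moveD (hdec : DirectSum.IsInternal V)
    (hgr : ∀ g h : G, ∀ x ∈ V g, ∀ y ∈ V h, ⁅x, y⁆ ∈ V (g * h)) (N : ℕ)
    (OIH : ∀ w : List G, w.length < N → Dw V w ≠ ⊥ → ∀ a ∈ w, ∀ b ∈ w, a * b = b * a) :
    ∀ (m p : List G) (a b : G), p.length + m.length + 2 = N →
      (∀ x ∈ m, a * x = x * a) → (∀ x ∈ m, x * b = b * x) →
      Dw V (p ++ a :: (m ++ [b])) ≠ ⊥ → a * b = b * a := by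
  intro m
  induction m with
  | nil =>
      intro p a b _ _ _ hne
      by_contra hab
      exact hne (Dw_pair_bot hdec hgr hab p)
  | cons x m' ih =>
      intro p a b hN hc1 hc2 hne
      have hsw := Dw_swap V hgr p a x (m' ++ [b])
      by_cases h1 : Dw V (p ++ x :: a :: (m' ++ [b])) = ⊥
      · have h2 : Dw V (p ++ (a * x) :: (m' ++ [b])) ≠ ⊥ := by
          intro h2
          apply hne
          have hbot : Dw V (p ++ a :: x :: (m' ++ [b])) = ⊥ :=
            le_bot_iff.1 (hsw.trans (by rw [h1, h2, sup_idem]))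
          simpa only [List.cons_append] using hbot
        have hlen : (p ++ (a * x) :: (m' ++ [b])).length < N := by
          simp only [List.length_append, List.length_cons, List.length_nil] at hN ⊢
          omega
        have hpw := OIH _ hlen h2
        have hmem1 : (a * x) ∈ p ++ (a * x) :: (m' ++ [b]) := by simp
        have hmem2 : b ∈ p ++ (a * x) :: (m' ++ [b]) := by simp
        have h3 : (a * x) * b = b * (a * x) := hpw _ hmem1 _ hmem2
        have h4 : x * b = b * x := hc2 x (by simp)
        have : a * b * x = b * a * x := by
          rw [mul_assoc, ← h4, ← mul_assoc, h3, mul_assoc]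
        exact mul_right_cancel this
      · refine ih (p ++ [x]) a b ?_ ?_ ?_ ?_
        · simp only [List.length_append, List.length_cons, List.length_nil] at hN ⊢
          omega
        · exact fun y hy => hc1 y (by simp [hy])
        · exact fun y hy => hc2 y (by simp [hy])
        · simpa [List.append_assoc] using h1

/-- Each entry of the prefix commutes with the last entry. -/
lemma commute_last (hdec : DirectSum.IsInternal V)
    (hgr : ∀ g h : G, ∀ x ∈ V g, ∀ y ∈ V h, ⁅x, y⁆ ∈ V (g * h))
    (w' : List G) (b : G)
    (hne : Dw V (w' ++ [b]) ≠ ⊥)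
    (hpw : ∀ a ∈ w', ∀ c ∈ w', a * c = c * a)
    (OIH : ∀ w : List G, w.length < w'.length + 1 → Dw V w ≠ ⊥ →
      ∀ a ∈ w, ∀ c ∈ w, a * c = c * a) :
    ∀ n (m p : List G) (a : G), m.length < n → w' = p ++ a :: m → a * b = b * a := by
  intro n
  induction n with
  | zero => intro m p a h; omega
  | succ n ihn =>
      intro m p a hmn hw'
      refine moveD hdec hgr (w'.length + 1) OIH m p a b ?_ ?_ ?_ ?_
      · rw [hw']; simp only [List.length_append, List.length_cons]; omega
      · intro x hx
        exact hpw a (by rw [hw']; simp) x (by rw [hw']; simp [hx])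
      · intro x hx
        obtain ⟨m₁, m₂, rfl⟩ := List.append_of_mem hx
        refine ihn m₂ (p ++ a :: m₁) x ?_ ?_
        · simp only [List.length_append, List.length_cons] at hmn ⊢; omega
        · rw [hw']; simp [List.append_assoc]
      · rw [hw'] at hne
        simpa [List.append_assoc] using hne

/-- Main lemma: nonzero word implies pairwise commuting entries. -/
lemma mainD (hdec : DirectSum.IsInternal V)
    (hgr : ∀ g h : G, ∀ x ∈ V g, ∀ y ∈ V h, ⁅x, y⁆ ∈ V (g * h)) :
    ∀ (n : ℕ) (w : List G), w.length ≤ n → Dw V w ≠ ⊥ →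
      ∀ a ∈ w, ∀ b ∈ w, a * b = b * a := by
  intro n
  induction n with
  | zero =>
      intro w hw _ a ha
      rw [List.length_eq_zero_iff.1 (Nat.le_zero.1 hw)] at ha
      exact absurd ha (List.not_mem_nil (a := a))
  | succ n ihn =>
      intro w hw hne a ha b hb
      rcases List.eq_nil_or_concat w with rfl | ⟨w', c, rfl⟩
      · exact absurd ha (List.not_mem_nil (a := a))
      rw [List.concat_eq_append] at ha hb hne hw
      rcases List.eq_nil_or_concat w' with rfl | hne'
      · simp only [List.nil_append, List.mem_singleton] at ha hb
        rw [ha, hb]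
      have hw'ne : w' ≠ [] := by rcases hne' with ⟨u, v, rfl⟩; simp
      obtain ⟨g, t, rfl⟩ := List.exists_cons_of_ne_nil hw'ne
      have hpre : Dw V (g :: t) ≠ ⊥ := by
        intro hbot
        apply hne
        rw [Dw_append, hbot]
        exact foldl_bracketSpan_bot _
      have hlen' : (g :: t).length ≤ n := by
        simp only [List.length_append, List.length_cons, List.length_nil] at hw ⊢
        omega
      have hpw := ihn (g :: t) hlen' hpre
      have OIH : ∀ u : List G, u.length < (g :: t).length + 1 → Dw V u ≠ ⊥ →
          ∀ x ∈ u, ∀ y ∈ u, x * y = y * x := by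
        intro u hu
        exact ihn u (by omega)
      have key : ∀ x ∈ (g :: t), x * c = c * x := by
        intro x hx
        obtain ⟨m₁, m₂, hdecomp⟩ := List.append_of_mem hx
        exact commute_last hdec hgr (g :: t) c hne hpw OIH (m₂.length + 1) m₂ m₁ x
          (Nat.lt_succ_self _) hdecomp
      rcases List.mem_append.1 ha with ha' | ha' <;>
        rcases List.mem_append.1 hb with hb' | hb'
      · exact hpw a ha' b hb'
      · rw [List.mem_singleton.1 hb']; exact key a ha'
      · rw [List.mem_singleton.1 ha']; exact (key b hb').symm
      · rw [List.mem_singleton.1 ha', List.mem_singleton.1 hb']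

end Main


/-- Let `G` be a group and `L = ⊕_{g∈G} L^(g)` a `G`-graded Lie algebra.  If the left-normed
commutator `[L^(g₁), L^(g₂), …, L^(g_k)]` is nonzero for some `g₁,…,g_k ∈ G`, then
`gᵢgⱼ = gⱼgᵢ` for all `1 ≤ i, j ≤ k`. -/
theorem stmt2 (F L G : Type*) [Field F] [LieRing L] [LieAlgebra F L] [Group G]
    [DecidableEq G] (V : G → Submodule F L) (hdec : DirectSum.IsInternal V)
    (hgr : ∀ g h : G, ∀ x ∈ V g, ∀ y ∈ V h, ⁅x, y⁆ ∈ V (g * h))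
    (k : ℕ) (gs : Fin (k + 1) → G)
    (hne : leftNormedBracket (V (gs 0)) (List.ofFn fun i : Fin k => V (gs i.succ)) ≠ ⊥) :
    ∀ i j : Fin (k + 1), gs i * gs j = gs j * gs i := by
  intro i j
  have hD : Dw V (List.ofFn gs) ≠ ⊥ := by
    rw [List.ofFn_succ (f := gs), Dw_cons, List.map_ofFn]
    exact hne
  exact mainD hdec hgr (List.ofFn gs).length (List.ofFn gs) le_rfl hD
    (gs i) ((List.mem_ofFn (f := gs) (a := gs i)).2 ⟨i, rfl⟩)
    (gs j) ((List.mem_ofFn (f := gs) (a := gs j)).2 ⟨j, rfl⟩)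
end

section
/- With L the metabelian Lie algebra of the previous context (basis a₁,…,a_m, b₁,…,b_m, [aᵢ,bⱼ]=δ_{ij}bⱼ, all other brackets of basis elements zero), the multilinear left-normed monomials f_j = [x₁, x_j, x_{i₃},…,x_{i_n}] with 2 ≤ j ≤ n and {i₃<…<i_n} = {2,…,n}∖{j} are linearly independent modulo the polynomial identities of L; hence the ordinary codimension sequence satisfies c_n(L) = n − 1 for all n ≥ 2. -/
/-- Evaluation of the left-normed Lie monomial `[x_{l₁}, x_{l₂}, …, x_{l_t}]` on a tuple `x`. -/
def evalWord {n : ℕ} {L : Type*} [LieRing L] (x : Fin n → L) : List (Fin n) → L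
  | [] => 0
  | a :: t => t.foldl (fun acc i => ⁅acc, x i⁆) (x a)

namespace Stmt14Aux

variable {F L : Type*} [Field F] [CharZero F] [LieRing L] [LieAlgebra F L]

section Fold
variable {N : ℕ} (x : Fin N → L)

def fold (c : L) (t : List (Fin N)) : L := t.foldl (fun acc i => ⁅acc, x i⁆) c

@[simp] lemma fold_nil (c : L) : fold x c [] = c := rfl

@[simp] lemma fold_cons (c : L) (p : Fin N) (t : List (Fin N)) :
    fold x c (p :: t) = fold x ⁅c, x p⁆ t := rfl

lemma evalWord_cons_cons (p q : Fin N) (t : List (Fin N)) :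
    evalWord x (p :: q :: t) = fold x ⁅x p, x q⁆ t := rfl

lemma fold_zero (t : List (Fin N)) : fold x 0 t = 0 := by
  induction t with
  | nil => rfl
  | cons p t ih => rw [fold_cons, zero_lie]; exact ih

lemma fold_neg (c : L) (t : List (Fin N)) : fold x (-c) t = - fold x c t := by
  induction t generalizing c with
  | nil => rfl
  | cons p t ih => rw [fold_cons, fold_cons, neg_lie]; exact ih _

lemma fold_sub (c d : L) (t : List (Fin N)) :
    fold x (c - d) t = fold x c t - fold x d t := by
  induction t generalizing c d with
  | nil => rfl
  | cons p t ih => rw [fold_cons, fold_cons, fold_cons, sub_lie]; exact ih _ _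

end Fold

section Alg
variable {m : ℕ} (v : Module.Basis (Fin m ⊕ Fin m) F L)

def Bsub : Submodule F L := Submodule.span F (Set.range fun i => v (Sum.inr i))

variable (haa : ∀ i j : Fin m, ⁅v (Sum.inl i), v (Sum.inl j)⁆ = 0)
variable (hbb : ∀ i j : Fin m, ⁅v (Sum.inr i), v (Sum.inr j)⁆ = 0)
variable (hab : ∀ i j : Fin m,
    ⁅v (Sum.inl i), v (Sum.inr j)⁆ = if i = j then v (Sum.inr j) else 0)

include haa hbb hab

lemma basis_lie_mem (i j : Fin m ⊕ Fin m) : ⁅v i, v j⁆ ∈ Bsub v := by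
  have hb : ∀ k : Fin m, v (Sum.inr k) ∈ Bsub v := fun k =>
    Submodule.subset_span ⟨k, rfl⟩
  rcases i with i | i <;> rcases j with j | j
  · rw [haa]; exact (Bsub v).zero_mem
  · rw [hab]; split
    · exact hb j
    · exact (Bsub v).zero_mem
  · rw [← lie_skew, hab]; split
    · exact (Bsub v).neg_mem (hb i)
    · rw [neg_zero]; exact (Bsub v).zero_mem
  · rw [hbb]; exact (Bsub v).zero_mem

lemma lie_mem_Bsub (y z : L) : ⁅y, z⁆ ∈ Bsub v := by
  have hy : y ∈ Submodule.span F (Set.range v) := by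
    rw [v.span_eq]; exact Submodule.mem_top
  induction hy using Submodule.span_induction generalizing z with
  | mem w hw =>
    obtain ⟨i, rfl⟩ := hw
    have hz : z ∈ Submodule.span F (Set.range v) := by
      rw [v.span_eq]; exact Submodule.mem_top
    induction hz using Submodule.span_induction with
    | mem u hu =>
      obtain ⟨j, rfl⟩ := hu
      exact basis_lie_mem v haa hbb hab i j
    | zero => rw [lie_zero]; exact (Bsub v).zero_mem
    | add a b _ _ ha hb => rw [lie_add]; exact (Bsub v).add_mem ha hb
    | smul r a _ ha => rw [lie_smul]; exact (Bsub v).smul_mem r ha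
  | zero => rw [zero_lie]; exact (Bsub v).zero_mem
  | add a b _ _ ha hb => rw [add_lie]; exact (Bsub v).add_mem (ha z) (hb z)
  | smul r a _ ha => rw [smul_lie]; exact (Bsub v).smul_mem r (ha z)

lemma Bsub_abelian {c d : L} (hc : c ∈ Bsub v) (hd : d ∈ Bsub v) : ⁅c, d⁆ = 0 := by
  induction hc using Submodule.span_induction generalizing d with
  | mem w hw =>
    obtain ⟨i, rfl⟩ := hw
    induction hd using Submodule.span_induction with
    | mem u hu => obtain ⟨j, rfl⟩ := hu; exact hbb i j
    | zero => rw [lie_zero]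
    | add a b _ _ ha hb => rw [lie_add, ha, hb, add_zero]
    | smul r a _ ha => rw [lie_smul, ha, smul_zero]
  | zero => rw [zero_lie]
  | add a b _ _ ha hb => rw [add_lie, ha hd, hb hd, add_zero]
  | smul r a _ ha => rw [smul_lie, ha hd, smul_zero]

variable {N : ℕ} (x : Fin N → L)

lemma fold_swap {c : L} (hc : c ∈ Bsub v) (p q : Fin N) (t : List (Fin N)) :
    fold x c (p :: q :: t) = fold x c (q :: p :: t) := by
  have hkey : ⁅⁅c, x p⁆, x q⁆ = ⁅⁅c, x q⁆, x p⁆ := by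
    rw [lie_lie, Bsub_abelian v haa hbb hab hc (lie_mem_Bsub v haa hbb hab _ _),
      zero_sub, ← lie_skew, neg_neg]
  rw [fold_cons, fold_cons, fold_cons, fold_cons, hkey]

lemma fold_perm {t₁ t₂ : List (Fin N)} (h : t₁.Perm t₂) :
    ∀ c ∈ Bsub v, fold x c t₁ = fold x c t₂ := by
  induction h with
  | nil => intro c _; rfl
  | cons p _ ih =>
    intro c hc
    rw [fold_cons, fold_cons]
    exact ih _ (lie_mem_Bsub v haa hbb hab _ _)
  | swap p q t =>
    intro c hc
    exact (fold_swap v haa hbb hab x hc p q t).symm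
  | trans _ _ ih1 ih2 =>
    intro c hc
    rw [ih1 c hc, ih2 c hc]

end Alg
end Stmt14Aux
namespace Stmt14Aux

variable {N : ℕ}

def tail2 (N : ℕ) (p q : Fin N) : List (Fin N) :=
  (List.finRange N).filter (fun i => decide (i ≠ p ∧ i ≠ q))

def tail3 (N : ℕ) (r p q : Fin N) : List (Fin N) :=
  (List.finRange N).filter (fun i => decide (i ≠ r ∧ i ≠ p ∧ i ≠ q))

lemma mem_tail2 {p q i : Fin N} : i ∈ tail2 N p q ↔ (i ≠ p ∧ i ≠ q) := by
  simp [tail2]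

lemma mem_tail3 {r p q i : Fin N} : i ∈ tail3 N r p q ↔ (i ≠ r ∧ i ≠ p ∧ i ≠ q) := by
  simp [tail3]

lemma nodup_tail2 (p q : Fin N) : (tail2 N p q).Nodup :=
  (List.nodup_finRange N).filter _

lemma nodup_tail3 (r p q : Fin N) : (tail3 N r p q).Nodup :=
  (List.nodup_finRange N).filter _

lemma tail2_symm (p q : Fin N) : tail2 N p q = tail2 N q p := by
  refine List.filter_congr (fun i _ => ?_)
  exact decide_eq_decide.mpr and_comm

lemma cperm {p q : Fin N} (hpq : p ≠ q) :
    (p :: q :: tail2 N p q).Perm (List.finRange N) := by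
  rw [List.perm_ext_iff_of_nodup ?_ (List.nodup_finRange _)]
  · intro a
    simp only [List.mem_cons, mem_tail2, List.mem_finRange, iff_true]
    tauto
  · refine List.Nodup.cons ?_ (List.Nodup.cons ?_ (nodup_tail2 p q)) <;>
      simp [mem_tail2, hpq]

lemma tail2_perm_cons {r p q : Fin N} (hrp : r ≠ p) (hrq : r ≠ q) :
    (tail2 N p q).Perm (r :: tail3 N r p q) := by
  rw [List.perm_ext_iff_of_nodup (nodup_tail2 p q) ?_]
  · intro a
    simp only [mem_tail2, List.mem_cons, mem_tail3]
    constructor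
    · rintro ⟨h1, h2⟩
      by_cases ha : a = r
      · exact Or.inl ha
      · exact Or.inr ⟨ha, h1, h2⟩
    · rintro (rfl | ⟨_, h1, h2⟩) <;> exact ⟨‹_ ≠ _›, ‹_ ≠ _›⟩
  · exact List.Nodup.cons (by simp [mem_tail3]) (nodup_tail3 r p q)

lemma tail3_comm (r p q : Fin N) : tail3 N r p q = tail3 N p r q := by
  refine List.filter_congr (fun i _ => ?_)
  refine decide_eq_decide.mpr ?_
  tauto

lemma tail3_rot (r p q : Fin N) : tail3 N r p q = tail3 N q r p := by
  refine List.filter_congr (fun i _ => ?_)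
  refine decide_eq_decide.mpr ?_
  tauto

end Stmt14Aux
namespace Stmt14Aux

variable {F L : Type*} [Field F] [CharZero F] [LieRing L] [LieAlgebra F L]
variable {m : ℕ} (v : Module.Basis (Fin m ⊕ Fin m) F L)
variable (haa : ∀ i j : Fin m, ⁅v (Sum.inl i), v (Sum.inl j)⁆ = 0)
variable (hbb : ∀ i j : Fin m, ⁅v (Sum.inr i), v (Sum.inr j)⁆ = 0)
variable (hab : ∀ i j : Fin m,
    ⁅v (Sum.inl i), v (Sum.inr j)⁆ = if i = j then v (Sum.inr j) else 0)
variable {N : ℕ}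

lemma tail3_congr {r p q r' p' q' : Fin N}
    (h : ∀ i : Fin N, (i = r ∨ i = p ∨ i = q) ↔ (i = r' ∨ i = p' ∨ i = q')) :
    tail3 N r p q = tail3 N r' p' q' := by
  refine List.filter_congr (fun i _ => ?_)
  refine decide_eq_decide.mpr ?_
  have := h i
  tauto

lemma lie_right_rot (u w z : L) : ⁅u, ⁅w, z⁆⁆ = ⁅⁅z, w⁆, u⁆ := by
  rw [show ⁅w, z⁆ = -⁅z, w⁆ from (lie_skew w z).symm, lie_neg]
  exact lie_skew _ _

lemma jac3 (x0 xp xq : L) : ⁅⁅xp, xq⁆, x0⁆ = ⁅⁅x0, xq⁆, xp⁆ - ⁅⁅x0, xp⁆, xq⁆ := by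
  rw [lie_lie, lie_right_rot xp xq x0, lie_right_rot xq xp x0]

lemma G_skew [NeZero N] (x : Fin N → L) {p : Fin N} (hp : p ≠ 0) :
    evalWord x (p :: 0 :: tail2 N p 0)
      = - evalWord x (0 :: p :: tail2 N 0 p) := by
  rw [evalWord_cons_cons, evalWord_cons_cons, tail2_symm p 0,
    show ⁅x p, x 0⁆ = -⁅x 0, x p⁆ from (lie_skew (x p) (x 0)).symm, fold_neg]

include haa hbb hab

lemma G_eq_fold3 (x : Fin N → L) {r p q : Fin N}
    (hpq : p ≠ q) (hrp : r ≠ p) (hrq : r ≠ q) :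
    evalWord x (p :: q :: tail2 N p q) = fold x ⁅⁅x p, x q⁆, x r⁆ (tail3 N r p q) := by
  rw [evalWord_cons_cons,
    fold_perm v haa hbb hab x (tail2_perm_cons hrp hrq) _
      (lie_mem_Bsub v haa hbb hab _ _)]
  rfl

lemma G_jacobi [NeZero N] (x : Fin N → L) {p q : Fin N}
    (hp : p ≠ 0) (hq : q ≠ 0) (hpq : p ≠ q) :
    evalWord x (p :: q :: tail2 N p q)
      = evalWord x (0 :: q :: tail2 N 0 q) - evalWord x (0 :: p :: tail2 N 0 p) := by
  rw [G_eq_fold3 v haa hbb hab x (r := 0) hpq (Ne.symm hp) (Ne.symm hq),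
    G_eq_fold3 v haa hbb hab x (r := p) (Ne.symm hq) hp hpq,
    G_eq_fold3 v haa hbb hab x (r := q) (Ne.symm hp) hq (Ne.symm hpq),
    tail3_congr (r := p) (p := 0) (q := q) (r' := 0) (p' := p) (q' := q) (by tauto),
    tail3_congr (r := q) (p := 0) (q := p) (r' := 0) (p' := p) (q' := q) (by tauto),
    jac3, fold_sub]


end Stmt14Aux

open Stmt14Aux in
/-- With `L` the `2m`-dimensional metabelian Lie algebra with basis `a₁,…,a_m, b₁,…,b_m` and
`[aᵢ,bⱼ] = δ_{ij}bⱼ` (all other brackets of basis vectors zero), the multilinear left-normed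
monomials `f_j = [x₁, x_j, x_{i₃},…,x_{i_n}]` (`2 ≤ j ≤ n`, remaining indices increasing) are
linearly independent modulo the identities of `L` (i.e. as multilinear functions on `L`);
hence the codimension sequence satisfies `c_n(L) = n − 1` for all `n ≥ 2`. -/
theorem stmt14 (F L : Type*) [Field F] [CharZero F] [LieRing L] [LieAlgebra F L]
    (m : ℕ) (hm : 0 < m) (v : Module.Basis (Fin m ⊕ Fin m) F L)
    (haa : ∀ i j : Fin m, ⁅v (Sum.inl i), v (Sum.inl j)⁆ = 0)
    (hbb : ∀ i j : Fin m, ⁅v (Sum.inr i), v (Sum.inr j)⁆ = 0)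
    (hab : ∀ i j : Fin m,
        ⁅v (Sum.inl i), v (Sum.inr j)⁆ = if i = j then v (Sum.inr j) else 0)
    (n : ℕ) :
    LinearIndependent F
      (fun (j : {i : Fin (n + 2) // i ≠ 0}) => fun x : Fin (n + 2) → L =>
        evalWord x ((0 : Fin (n + 2)) :: (j : Fin (n + 2)) ::
          ((List.finRange (n + 2)).filter
            fun i => decide (i ≠ 0 ∧ i ≠ (j : Fin (n + 2)))))) ∧
    Module.finrank F
      ↥(Submodule.span F
        (Set.range fun σ : Equiv.Perm (Fin (n + 2)) => fun x : Fin (n + 2) → L =>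
          evalWord x ((List.finRange (n + 2)).map σ))) = n + 1 := by
  classical
  set f : {i : Fin (n + 2) // i ≠ 0} → ((Fin (n + 2) → L) → L) :=
    fun (j : {i : Fin (n + 2) // i ≠ 0}) => fun x : Fin (n + 2) → L =>
      evalWord x ((0 : Fin (n + 2)) :: (j : Fin (n + 2)) ::
        ((List.finRange (n + 2)).filter
          fun i => decide (i ≠ 0 ∧ i ≠ (j : Fin (n + 2))))) with hfdef
  set a0 : L := v (Sum.inl ⟨0, hm⟩) with ha0def
  set b0 : L := v (Sum.inr ⟨0, hm⟩) with hb0def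
  have hab0 : ⁅a0, b0⁆ = b0 := by simpa using hab ⟨0, hm⟩ ⟨0, hm⟩
  have hba0 : ⁅b0, a0⁆ = -b0 := by rw [← lie_skew, hab0]
  have hb0ne : b0 ≠ 0 := v.ne_zero _
  have hfoldb : ∀ (t : List (Fin (n + 2))) (x : Fin (n + 2) → L),
      (∀ k ∈ t, x k = a0) → ∃ c : F, c ≠ 0 ∧ fold x b0 t = c • b0 := by
    intro t
    induction t with
    | nil => exact fun x _ => ⟨1, one_ne_zero, (one_smul F b0).symm⟩
    | cons k t ih =>
      intro x hx
      obtain ⟨c, hc, hcv⟩ := ih x (fun k' hk' => hx k' (List.mem_cons_of_mem _ hk'))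
      refine ⟨-c, neg_ne_zero.mpr hc, ?_⟩
      rw [fold_cons, hx k List.mem_cons_self, hba0, fold_neg, hcv, neg_smul]
  have hli : LinearIndependent F f := by
    rw [Fintype.linearIndependent_iff]
    intro g hg j₀
    set xx : Fin (n + 2) → L :=
      fun i => if i = (j₀ : Fin (n + 2)) then b0 else a0 with hxxdef
    have hxa : ∀ k : Fin (n + 2), k ≠ (j₀ : Fin (n + 2)) → xx k = a0 :=
      fun k hk => if_neg hk
    have hxx0 : xx 0 = a0 := hxa 0 (Ne.symm j₀.prop)
    have hxxj : xx (j₀ : Fin (n + 2)) = b0 := if_pos rfl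
    have h0 := congrFun hg xx
    have h1 : ∑ i, g i • f i xx = (0 : L) := by
      simpa [Finset.sum_apply] using h0
    have hother : ∀ i : {i : Fin (n + 2) // i ≠ 0}, i ≠ j₀ → f i xx = 0 := by
      intro i hi
      have hic : (i : Fin (n + 2)) ≠ (j₀ : Fin (n + 2)) := fun h => hi (Subtype.ext h)
      show fold xx ⁅xx 0, xx (i : Fin (n + 2))⁆ _ = 0
      rw [hxx0, hxa _ hic, lie_self, fold_zero]
    rw [Fintype.sum_eq_single j₀ (fun i hi => by rw [hother i hi, smul_zero])] at h1
    have hfj : ∃ c : F, c ≠ 0 ∧ f j₀ xx = c • b0 := by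
      obtain ⟨c, hc, hcv⟩ := hfoldb (tail2 (n + 2) 0 (j₀ : Fin (n + 2))) xx
        (fun k hk => hxa k (mem_tail2.mp hk).2)
      refine ⟨c, hc, ?_⟩
      show fold xx ⁅xx 0, xx (j₀ : Fin (n + 2))⁆ (tail2 (n + 2) 0 (j₀ : Fin (n + 2))) = c • b0
      rw [hxx0, hxxj, hab0, hcv]
    obtain ⟨c, hc, hcv⟩ := hfj
    rw [hcv, smul_smul] at h1
    rcases smul_eq_zero.mp h1 with h | h
    · exact (mul_eq_zero.mp h).resolve_right hc
    · exact absurd h hb0ne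
  refine ⟨hli, ?_⟩
  set S := Submodule.span F
      (Set.range fun σ : Equiv.Perm (Fin (n + 2)) => fun x : Fin (n + 2) → L =>
        evalWord x ((List.finRange (n + 2)).map σ)) with hSdef
  have hWS : ∀ j, f j ∈ S := by
    intro j
    have hj0 : (0 : Fin (n + 2)) ≠ (j : Fin (n + 2)) := Ne.symm j.prop
    set l : List (Fin (n + 2)) :=
      (0 : Fin (n + 2)) :: (j : Fin (n + 2)) :: tail2 (n + 2) 0 (j : Fin (n + 2)) with hldef
    have hlp : l.Perm (List.finRange (n + 2)) := cperm hj0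
    have hlen : l.length = n + 2 := by rw [hlp.length_eq, List.length_finRange]
    have hlnd : l.Nodup := hlp.nodup_iff.mpr (List.nodup_finRange _)
    have ginj : Function.Injective (fun i : Fin (n + 2) => l.get (Fin.cast hlen.symm i)) :=
      (List.nodup_iff_injective_get.mp hlnd).comp (Fin.cast_injective _)
    set σ : Equiv.Perm (Fin (n + 2)) :=
      Equiv.ofBijective _ (Finite.injective_iff_bijective.mp ginj) with hσdef
    have hmap : (List.finRange (n + 2)).map σ = l := by
      rw [← List.ofFn_eq_map]
      refine List.ext_get (by simp [hlen]) ?_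
      intro k h1 h2
      rw [List.get_ofFn]
      show l.get _ = l.get _
      congr 1
    refine Submodule.subset_span ⟨σ, ?_⟩
    show (fun x : Fin (n + 2) → L => evalWord x ((List.finRange (n + 2)).map σ)) = f j
    rw [hmap]
    exact rfl
  have hSW : S ≤ Submodule.span F (Set.range f) := by
    rw [hSdef]
    refine Submodule.span_le.mpr ?_
    rintro _ ⟨σ, rfl⟩
    obtain ⟨p, q, t, hl⟩ : ∃ p q t, (List.finRange (n + 2)).map σ = p :: q :: t := by
      rcases hcl : (List.finRange (n + 2)).map σ with _ | ⟨p, _ | ⟨q, t⟩⟩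
      · have := congrArg List.length hcl; simp at this
      · have := congrArg List.length hcl; simp at this
      · exact ⟨p, q, t, rfl⟩
    have hlnd : (p :: q :: t).Nodup := by
      rw [← hl]; exact (List.nodup_finRange _).map σ.injective
    have hlp : (p :: q :: t).Perm (List.finRange (n + 2)) := by
      rw [← hl, List.perm_ext_iff_of_nodup (hl ▸ hlnd) (List.nodup_finRange _)]
      intro a
      simp only [List.mem_map, List.mem_finRange, true_and, iff_true]
      exact ⟨σ.symm a, σ.apply_symm_apply a⟩
    have hpq : p ≠ q := by
      intro h; subst h; simp [List.nodup_cons] at hlnd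
    have ht : t.Perm (tail2 (n + 2) p q) := by
      rw [List.perm_ext_iff_of_nodup
        (List.nodup_cons.mp (List.nodup_cons.mp hlnd).2).2 (nodup_tail2 p q)]
      intro a
      rw [mem_tail2]
      constructor
      · intro hat
        refine ⟨?_, ?_⟩
        · rintro rfl; exact (List.nodup_cons.mp hlnd).1 (List.mem_cons_of_mem _ hat)
        · rintro rfl; exact (List.nodup_cons.mp (List.nodup_cons.mp hlnd).2).1 hat
      · rintro ⟨hap, haq⟩
        have hmem : a ∈ p :: q :: t := hlp.mem_iff.mpr (List.mem_finRange a)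
        simp only [List.mem_cons] at hmem
        tauto
    have heq : (fun x : Fin (n + 2) → L => evalWord x ((List.finRange (n + 2)).map σ))
        = fun x => evalWord x (p :: q :: tail2 (n + 2) p q) := by
      funext x
      rw [hl, evalWord_cons_cons, evalWord_cons_cons,
        fold_perm v haa hbb hab x ht _ (lie_mem_Bsub v haa hbb hab _ _)]
    show (fun x : Fin (n + 2) → L => evalWord x ((List.finRange (n + 2)).map σ))
      ∈ Submodule.span F (Set.range f)
    rw [heq]
    by_cases hp : p = 0
    · subst hp
      exact Submodule.subset_span ⟨⟨q, Ne.symm hpq⟩, rfl⟩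
    · by_cases hq : q = 0
      · subst hq
        have hneg : (fun x : Fin (n + 2) → L => evalWord x (p :: 0 :: tail2 (n + 2) p 0))
            = -(f ⟨p, hp⟩) := by
          funext x
          rw [Pi.neg_apply, G_skew x hp]
          rfl
        rw [hneg]
        exact Submodule.neg_mem _ (Submodule.subset_span ⟨⟨p, hp⟩, rfl⟩)
      · have hsub : (fun x : Fin (n + 2) → L => evalWord x (p :: q :: tail2 (n + 2) p q))
            = f ⟨q, hq⟩ - f ⟨p, hp⟩ := by
          funext x
          rw [Pi.sub_apply, G_jacobi v haa hbb hab x hp hq hpq]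
          rfl
        rw [hsub]
        exact Submodule.sub_mem _ (Submodule.subset_span ⟨⟨q, hq⟩, rfl⟩)
          (Submodule.subset_span ⟨⟨p, hp⟩, rfl⟩)
  have hSeq : S = Submodule.span F (Set.range f) :=
    le_antisymm hSW (Submodule.span_le.mpr (by rintro _ ⟨j, rfl⟩; exact hWS j))
  rw [hSeq, finrank_span_eq_card hli]
  have hcard : Fintype.card {i : Fin (n + 2) // i ≠ 0} = n + 1 := by
    have h := Fintype.card_subtype_compl (fun i : Fin (n + 2) => i = 0)
    rw [Fintype.card_subtype_eq] at h
    simpa using h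
  rw [hcard]
end

section
/- Let L be a finite-dimensional Lie algebra over a field F of characteristic 0 such that for some group G grading L, L = ⊕_{g∈G} L^(g) is graded-simple. If some homogeneous component L^(g) is nonzero and L equals the sum of all nonzero left-normed commutators [L^(g), L^(g₁),…,L^(g_t)], then g commutes with every element of the support {h ∈ G : L^(h) ≠ 0}; consequently the support of the grading on a graded-simple finite-dimensional Lie algebra generates an abelian subgroup of G. -/
set_option linter.unusedSectionVars false

namespace Stmt17Aux

variable {F L G : Type*} [Field F] [LieRing L] [LieAlgebra F L] [Group G] [DecidableEq G]

/-- Left-normed bracket of a seed with a list of (element, degree) pairs. -/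
def bk (y : L) (ps : List (L × G)) : L := ps.foldl (fun z p => ⁅z, p.1⁆) y

@[simp] lemma bk_nil (y : L) : bk y ([] : List (L × G)) = y := rfl

@[simp] lemma bk_cons (y : L) (p : L × G) (ps : List (L × G)) :
    bk y (p :: ps) = bk ⁅y, p.1⁆ ps := rfl

lemma bk_append (y : L) (l₁ l₂ : List (L × G)) : bk y (l₁ ++ l₂) = bk (bk y l₁) l₂ :=
  List.foldl_append

@[simp] lemma bk_zero (ps : List (L × G)) : bk (0 : L) ps = 0 := by
  induction ps with
  | nil => rfl
  | cons p ps ih => simp [bk_cons, ih]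

lemma bk_add (y z : L) (ps : List (L × G)) : bk (y + z) ps = bk y ps + bk z ps := by
  induction ps generalizing y z with
  | nil => rfl
  | cons p ps ih => simp only [bk_cons, add_lie, ih]

variable (V : G → Submodule F L)

lemma bk_mem (hgr : ∀ g h : G, ∀ x ∈ V g, ∀ y ∈ V h, ⁅x, y⁆ ∈ V (g * h))
    {u : G} {y : L} (hy : y ∈ V u) {ps : List (L × G)}
    (hps : ∀ p ∈ ps, p.1 ∈ V p.2) : bk y ps ∈ V (u * (ps.map Prod.snd).prod) := by
  induction ps generalizing u y with
  | nil => simpa using hy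
  | cons p ps ih =>
    simp only [bk_cons, List.map_cons, List.prod_cons, ← mul_assoc]
    exact ih (hgr _ _ _ hy _ (hps p (by simp))) (fun q hq => hps q (by simp [hq]))

lemma disj (hdec : DirectSum.IsInternal V) {w w' : G} (hne : w ≠ w') {z : L}
    (h1 : z ∈ V w) (h2 : z ∈ V w') : z = 0 := by
  have hind := hdec.submodule_iSupIndep w
  have hz : z ∈ ⨆ j, ⨆ (_ : j ≠ w), V j :=
    Submodule.mem_iSup_of_mem w' (Submodule.mem_iSup_of_mem (Ne.symm hne) h2)
  exact Submodule.disjoint_def.mp hind z h1 hz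

lemma lie_eq_zero_of_not_commute (hdec : DirectSum.IsInternal V)
    (hgr : ∀ g h : G, ∀ x ∈ V g, ∀ y ∈ V h, ⁅x, y⁆ ∈ V (g * h))
    {u c : G} (h : ¬ Commute u c) {y b : L} (hy : y ∈ V u) (hb : b ∈ V c) : ⁅y, b⁆ = 0 := by
  have h1 : ⁅y, b⁆ ∈ V (u * c) := hgr _ _ _ hy _ hb
  have h2 : ⁅y, b⁆ ∈ V (c * u) := by
    have := neg_mem (hgr _ _ _ hb _ hy)
    rwa [lie_skew] at this
  exact disj V hdec (fun e => h e) h1 h2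

lemma swap_identity (w a b : L) : ⁅⁅w, a⁆, b⁆ = ⁅⁅w, b⁆, a⁆ + ⁅w, ⁅a, b⁆⁆ := by
  rw [lie_lie, ← lie_skew a ⁅w, b⁆]
  abel

/-- Moving the distinguished element left through the bracket. -/
lemma inner (hdec : DirectSum.IsInternal V)
    (hgr : ∀ g h : G, ∀ x ∈ V g, ∀ y ∈ V h, ⁅x, y⁆ ∈ V (g * h)) (n : ℕ)
    (IH : ∀ ps : List (L × G), ps.length < n → (∀ p ∈ ps, p.1 ∈ V p.2) →
      ∀ u : G, ∀ y ∈ V u, bk y ps ≠ 0 → ∀ p ∈ ps, Commute u p.2)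
    {u : G} {y : L} (hy : y ∈ V u) (pre : List (L × G)) :
    ∀ (b : L × G) (suf : List (L × G)),
      (∀ p ∈ pre ++ b :: suf, p.1 ∈ V p.2) →
      bk y (pre ++ b :: suf) ≠ 0 →
      pre.length + suf.length + 1 = n →
      (∀ p ∈ pre ++ suf, Commute u p.2) → Commute u b.2 := by
  induction pre using List.reverseRecOn with
  | nil =>
    intro b suf hmem hne hlen hcomm
    by_contra hnc
    apply hne
    have h0 : ⁅y, b.1⁆ = 0 :=
      lie_eq_zero_of_not_commute V hdec hgr hnc hy (hmem b (by simp))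
    simp [bk_cons, h0]
  | append_singleton pre a ihp =>
    intro b suf hmem hne hlen hcomm
    set q : L × G := (⁅a.1, b.1⁆, a.2 * b.2) with hq
    have hw1 : bk y ((pre ++ [a]) ++ b :: suf) = bk ⁅⁅bk y pre, a.1⁆, b.1⁆ suf := by
      rw [bk_append, bk_append]; rfl
    have hw2 : bk y (pre ++ b :: a :: suf) = bk ⁅⁅bk y pre, b.1⁆, a.1⁆ suf := by
      rw [bk_append]; rfl
    have hw3 : bk y (pre ++ q :: suf) = bk ⁅bk y pre, ⁅a.1, b.1⁆⁆ suf := by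
      rw [bk_append]; rfl
    have hsplit : bk y ((pre ++ [a]) ++ b :: suf)
        = bk y (pre ++ b :: a :: suf) + bk y (pre ++ q :: suf) := by
      rw [hw1, hw2, hw3, ← bk_add, swap_identity]
    by_cases hE : bk y (pre ++ q :: suf) = 0
    · have hne' : bk y (pre ++ b :: a :: suf) ≠ 0 := by
        intro h0
        apply hne
        rw [hsplit, h0, hE, add_zero]
      refine ihp b (a :: suf) ?_ hne' ?_ ?_
      · intro p hp
        apply hmem
        simp only [List.mem_append, List.mem_cons] at hp ⊢
        tauto
      · simp only [List.length_append, List.length_cons, List.length_singleton, List.length_nil] at hlen ⊢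
        omega
      · intro p hp
        apply hcomm
        simp only [List.mem_append, List.mem_cons, List.mem_singleton] at hp ⊢
        tauto
    · have hqmem : ∀ p ∈ pre ++ q :: suf, p.1 ∈ V p.2 := by
        intro p hp
        rcases List.mem_append.mp hp with hp' | hp'
        · exact hmem p (by simp [hp'])
        · rcases List.mem_cons.mp hp' with rfl | hp''
          · exact hgr _ _ _ (hmem a (by simp)) _ (hmem b (by simp))
          · exact hmem p (by simp [hp''])
      have hlt : (pre ++ q :: suf).length < n := by
        simp only [List.length_append, List.length_cons, List.length_singleton, List.length_nil] at hlen ⊢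
        omega
      have hcq : Commute u q.2 :=
        IH (pre ++ q :: suf) hlt hqmem u y hy hE q (by simp)
      have hca : Commute u a.2 := hcomm a (by simp)
      have : Commute u (a.2⁻¹ * (a.2 * b.2)) := hca.inv_right.mul_right hcq
      rwa [inv_mul_cancel_left] at this

/-- A nonzero left-normed bracket forces the seed degree to commute with every entry degree. -/
lemma weakM (hdec : DirectSum.IsInternal V)
    (hgr : ∀ g h : G, ∀ x ∈ V g, ∀ y ∈ V h, ⁅x, y⁆ ∈ V (g * h)) :
    ∀ (n : ℕ) (ps : List (L × G)), ps.length = n → (∀ p ∈ ps, p.1 ∈ V p.2) →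
      ∀ u : G, ∀ y ∈ V u, bk y ps ≠ 0 → ∀ p ∈ ps, Commute u p.2 := by
  intro n
  induction n using Nat.strong_induction_on with
  | _ n IHn =>
    have IH : ∀ ps : List (L × G), ps.length < n → (∀ p ∈ ps, p.1 ∈ V p.2) →
        ∀ u : G, ∀ y ∈ V u, bk y ps ≠ 0 → ∀ p ∈ ps, Commute u p.2 :=
      fun ps hlt hm u y hy hne p hp => IHn ps.length hlt ps rfl hm u y hy hne p hp
    intro ps hlen hmem u y hy hne p hp
    rcases List.eq_nil_or_concat ps with rfl | ⟨ps', q, rfl⟩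
    · simp at hp
    · rw [List.concat_eq_append] at hlen hmem hne hp
      have hne' : bk y ps' ≠ 0 := by
        intro h0
        apply hne
        rw [bk_append, h0]
        simp
      have hlt' : ps'.length < n := by
        simp only [List.length_append, List.length_singleton, List.length_cons, List.length_nil] at hlen
        omega
      have hpre : ∀ r ∈ ps', Commute u r.2 :=
        IH ps' hlt' (fun r hr => hmem r (by simp [hr])) u y hy hne'
      rcases List.mem_append.mp hp with hp' | hp'
      · exact hpre p hp'
      · have hpq : p = q := by simpa using hp'
        subst hpq
        refine inner V hdec hgr n IH hy ps' p [] ?_ ?_ ?_ ?_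
        · simpa using hmem
        · simpa using hne
        · simp only [List.length_append, List.length_singleton, List.length_cons, List.length_nil] at hlen
          simpa using hlen
        · simpa using hpre

end Stmt17Aux

open Stmt17Aux in
/-- Let `L = ⊕_{g∈G} L^(g)` be a finite-dimensional graded-simple Lie algebra over a field of
characteristic `0`.  Then any two elements of the support `{g : L^(g) ≠ 0}` commute;
consequently the support generates an abelian subgroup of `G`. -/
theorem stmt17 (F L G : Type*) [Field F] [CharZero F] [LieRing L] [LieAlgebra F L]
    [FiniteDimensional F L] [Group G] [DecidableEq G]
    (V : G → Submodule F L) (hdec : DirectSum.IsInternal V)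
    (hgr : ∀ g h : G, ∀ x ∈ V g, ∀ y ∈ V h, ⁅x, y⁆ ∈ V (g * h))
    (hnonab : ∃ x y : L, ⁅x, y⁆ ≠ 0)
    (hsimple : ∀ I : LieIdeal F L,
        I.toSubmodule = (⨆ g : G, (I.toSubmodule ⊓ V g)) → I = ⊥ ∨ I = ⊤) :
    (∀ g h : G, V g ≠ ⊥ → V h ≠ ⊥ → Commute g h) ∧
    (∀ x ∈ Subgroup.closure {g : G | V g ≠ ⊥},
     ∀ y ∈ Subgroup.closure {g : G | V g ≠ ⊥}, Commute x y) := by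
  have main : ∀ g h : G, V g ≠ ⊥ → V h ≠ ⊥ → Commute g h := by
    intro g h hg hh
    obtain ⟨v, hv, hv0⟩ := (Submodule.ne_bot_iff _).mp hh
    set S : Set L :=
      {z | ∃ y ps, y ∈ V g ∧ (∀ p ∈ ps, p.1 ∈ V p.2) ∧ z = bk y ps} with hSdef
    -- the span of S is a Lie ideal
    have key : ∀ x : L, ∀ s ∈ S, ⁅x, s⁆ ∈ Submodule.span F S := by
      intro x s hs
      let T : Submodule F L :=
        { carrier := {x | ⁅x, s⁆ ∈ Submodule.span F S}
          add_mem' := by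
            intro a b ha hb
            simp only [Set.mem_setOf_eq, add_lie] at ha hb ⊢
            exact add_mem ha hb
          zero_mem' := by simp only [Set.mem_setOf_eq, zero_lie]; exact zero_mem _
          smul_mem' := by
            intro c a ha
            simp only [Set.mem_setOf_eq, smul_lie] at ha ⊢
            exact Submodule.smul_mem _ c ha }
      have hVT : ∀ w, V w ≤ T := by
        intro w x hx
        obtain ⟨y, ps, hy, hps, rfl⟩ := hs
        show ⁅x, bk y ps⁆ ∈ Submodule.span F S
        have hrw : ⁅x, bk y ps⁆ = -(bk y (ps ++ [(x, w)])) := by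
          rw [bk_append]
          simp only [bk_cons, bk_nil]
          rw [← lie_skew]
        rw [hrw]
        refine neg_mem (Submodule.subset_span ⟨y, ps ++ [(x, w)], hy, ?_, rfl⟩)
        intro p hp
        rcases List.mem_append.mp hp with hp' | hp'
        · exact hps p hp'
        · have : p = (x, w) := by simpa using hp'
          subst this
          exact hx
      have htop : (⊤ : Submodule F L) ≤ T := by
        rw [← hdec.submodule_iSup_eq_top]
        exact iSup_le hVT
      exact htop trivial
    let I : LieIdeal F L :=
      { toSubmodule := Submodule.span F S
        lie_mem := by
          intro x m hm
          have hle : Submodule.span F S ≤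
              Submodule.comap (LieAlgebra.ad F L x) (Submodule.span F S) :=
            Submodule.span_le.mpr (fun s hs => key x s hs)
          have := hle hm
          simpa [LieAlgebra.ad_apply] using this }
    have hItoS : I.toSubmodule = Submodule.span F S := rfl
    have hIgr : I.toSubmodule = ⨆ w : G, (I.toSubmodule ⊓ V w) := by
      refine le_antisymm ?_ (iSup_le fun w => inf_le_left)
      rw [hItoS]
      refine Submodule.span_le.mpr fun s hs => ?_
      obtain ⟨y, ps, hy, hps, rfl⟩ := hs
      have h1 : bk y ps ∈ V (g * (ps.map Prod.snd).prod) := bk_mem V hgr hy hps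
      exact Submodule.mem_iSup_of_mem (g * (ps.map Prod.snd).prod)
        ⟨Submodule.subset_span ⟨y, ps, hy, hps, rfl⟩, h1⟩
    obtain ⟨x0, hx0, hx00⟩ := (Submodule.ne_bot_iff _).mp hg
    have hIne : I ≠ ⊥ := by
      intro hbot
      apply hx00
      have hx0I : x0 ∈ I := Submodule.subset_span ⟨x0, [], hx0, by simp, rfl⟩
      rw [hbot] at hx0I
      exact (LieSubmodule.mem_bot _).mp hx0I
    have hItop : I = ⊤ := (hsimple I hIgr).resolve_left hIne
    have hvS : v ∈ Submodule.span F S := by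
      have : v ∈ I := by rw [hItop]; exact LieSubmodule.mem_top v
      exact this
    -- project onto the component V h
    set W : Submodule F L := Submodule.span F (S ∩ (V h : Set L)) with hWdef
    have hWle : W ≤ V h := Submodule.span_le.mpr fun s hs => hs.2
    set X : Submodule F L := ⨆ w : G, ⨆ (_ : w ≠ h), V w with hXdef
    have hsp : Submodule.span F S ≤ W ⊔ X := by
      refine Submodule.span_le.mpr fun s hs => ?_
      obtain ⟨y, ps, hy, hps, rfl⟩ := hs
      have h1 : bk y ps ∈ V (g * (ps.map Prod.snd).prod) := bk_mem V hgr hy hps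
      by_cases hcase : g * (ps.map Prod.snd).prod = h
      · refine Submodule.mem_sup_left (Submodule.subset_span ?_)
        exact ⟨⟨y, ps, hy, hps, rfl⟩, by rwa [hcase] at h1⟩
      · exact Submodule.mem_sup_right
          (Submodule.mem_iSup_of_mem _ (Submodule.mem_iSup_of_mem hcase h1))
    have hdisj : Disjoint (V h) X := hdec.submodule_iSupIndep h
    have hvW : v ∈ W := by
      have h2 : v ∈ V h ⊓ (W ⊔ X) := ⟨hv, hsp hvS⟩
      have e : V h ⊓ (W ⊔ X) = W := by
        rw [sup_comm, ← inf_sup_assoc_of_le X hWle, hdisj.eq_bot, bot_sup_eq]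
      rwa [e] at h2
    have hex : ∃ s ∈ S ∩ (V h : Set L), s ≠ 0 := by
      by_contra hc
      push_neg at hc
      apply hv0
      have hsub : S ∩ (V h : Set L) ⊆ ({0} : Set L) := fun s hs => hc s hs
      have : W ≤ ⊥ := by
        rw [hWdef]
        refine Submodule.span_le.mpr (hsub.trans ?_)
        simp
      simpa using this hvW
    obtain ⟨s, ⟨hsS, hsVh⟩, hs0⟩ := hex
    obtain ⟨y, ps, hy, hps, rfl⟩ := hsS
    have h1 : bk y ps ∈ V (g * (ps.map Prod.snd).prod) := bk_mem V hgr hy hps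
    have heq : g * (ps.map Prod.snd).prod = h := by
      by_contra hne2
      exact hs0 (disj V hdec hne2 h1 hsVh)
    have hcom : ∀ p ∈ ps, Commute g p.2 :=
      weakM V hdec hgr ps.length ps rfl hps g y hy hs0
    have hprod : Commute g ((ps.map Prod.snd).prod) :=
      Commute.list_prod_right _ _ (fun c hc => by
        obtain ⟨p, hp, rfl⟩ := List.mem_map.mp hc
        exact hcom p hp)
    have := (Commute.refl g).mul_right hprod
    rwa [heq] at this
  refine ⟨main, ?_⟩
  have step1 : ∀ y ∈ Subgroup.closure {g : G | V g ≠ ⊥},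
      ∀ g ∈ {g : G | V g ≠ ⊥}, Commute g y := by
    intro y hy
    induction hy using Subgroup.closure_induction with
    | mem z hz => exact fun g hg => main g z hg hz
    | one => exact fun g _ => Commute.one_right g
    | mul a b ha hb iha ihb => exact fun g hg => (iha g hg).mul_right (ihb g hg)
    | inv a ha iha => exact fun g hg => (iha g hg).inv_right
  intro x hx y hy
  induction hx using Subgroup.closure_induction with
  | mem z hz => exact step1 y hy z hz
  | one => exact Commute.one_left y
  | mul a b ha hb iha ihb => exact iha.mul_left ihb
  | inv a ha iha => exact iha.inv_left
end
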